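/- (Core of Lemma 5.1 of the paper, one-dimensional case.) Let k, η ∈ ℕ and ℓ ∈ ℤ, and let X = (X₁,X₂,X₃,X₄) have independent components, each uniformly distributed on the symmetric integer set {−(2^k−1), …, 2^k−1}. Then the expected value of the propagated binary-truncation error 2^ℓ·Linv·(τ_η(X) − X) (with τ_η applied componentwise, computed in ℚ⁴) is the zero vector; i.e., the error introduced by ZFP's block-floating-point conversion (Step 2) is unbiased. -/

import Mathlib

open Matrix

/-- ZFP's backward decorrelating transform. -/
def Linv : Matrix (Fin 4) (Fin 4) ℚ :=
  (1 / 4 : ℚ) • !![4, 6, -4, -1; 4, 2, 4, 5; 4, -2, 4, -5; 4, -6, -4, 1]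

/-- Sign-magnitude binary truncation `τ_η`. -/
def btrunc (η : ℕ) (n : ℤ) : ℤ :=
  n.sign * (2 ^ (η + 1) * ((n.natAbs / 2 ^ (η + 1) : ℕ) : ℤ))

/-- The symmetric integer set `{-(2^k-1), …, 2^k-1}`. -/
noncomputable def symmSet (k : ℕ) : Finset ℤ := Finset.Icc (-(2 ^ k - 1)) (2 ^ k - 1)

lemma btrunc_neg (η : ℕ) (n : ℤ) : btrunc η (-n) = -btrunc η n := by
  simp [btrunc, Int.sign_neg, neg_mul]

lemma err_sum_zero (k η : ℕ) :
    ∑ x ∈ symmSet k, ((btrunc η x - x : ℤ) : ℚ) = 0 := by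
  have h : ∑ x ∈ symmSet k, ((btrunc η x - x : ℤ) : ℚ)
      = ∑ x ∈ symmSet k, ((btrunc η (-x) - (-x) : ℤ) : ℚ) := by
    apply Finset.sum_nbij' (fun x => -x) (fun x => -x)
    · intro a ha; simp only [symmSet, Finset.mem_Icc] at *; omega
    · intro a ha; simp only [symmSet, Finset.mem_Icc] at *; omega
    · intro a _; ring
    · intro a _; ring
    · intro a _; rw [neg_neg]
  have h2 : (2 : ℚ) * ∑ x ∈ symmSet k, ((btrunc η x - x : ℤ) : ℚ) = 0 := by
    rw [two_mul]; nth_rewrite 2 [h]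
    rw [← Finset.sum_add_distrib]
    apply Finset.sum_eq_zero
    intro x _
    push_cast [btrunc_neg]
    ring
  linarith

theorem step2_error_unbiased (k η : ℕ) (ℓ : ℤ) :
    ∀ i : Fin 4,
      (∑ x1 ∈ symmSet k, ∑ x2 ∈ symmSet k, ∑ x3 ∈ symmSet k, ∑ x4 ∈ symmSet k,
          (2 : ℚ) ^ ℓ *
            Linv.mulVec
              (fun j => ((btrunc η (![x1, x2, x3, x4] j) - ![x1, x2, x3, x4] j : ℤ) : ℚ)) i) /
        ((symmSet k).card : ℚ) ^ 4 = 0 := by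
  intro i
  have key : (∑ x1 ∈ symmSet k, ∑ x2 ∈ symmSet k, ∑ x3 ∈ symmSet k, ∑ x4 ∈ symmSet k,
      (2 : ℚ) ^ ℓ *
        Linv.mulVec
          (fun j => ((btrunc η (![x1, x2, x3, x4] j) - ![x1, x2, x3, x4] j : ℤ) : ℚ)) i) = 0 := by
    simp only [mulVec, dotProduct, Fin.sum_univ_four, Matrix.cons_val_zero,
      Matrix.cons_val_one, Matrix.head_cons, Matrix.cons_val_two, Matrix.tail_cons,
      Matrix.cons_val_three, mul_add, Finset.sum_add_distrib]
    rw [show (0:ℚ) = 0 + 0 + 0 + 0 by ring]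
    congr 1; congr 1; congr 1
    · simp only [← Finset.sum_mul, ← Finset.mul_sum, Finset.sum_const, nsmul_eq_mul]
      rw [err_sum_zero]; ring
    · simp only [← Finset.sum_mul, ← Finset.mul_sum, Finset.sum_const, nsmul_eq_mul]
      rw [err_sum_zero]; ring
    · simp only [← Finset.sum_mul, ← Finset.mul_sum, Finset.sum_const, nsmul_eq_mul]
      rw [err_sum_zero]; ring
    · simp only [← Finset.sum_mul, ← Finset.mul_sum, Finset.sum_const, nsmul_eq_mul]
      rw [err_sum_zero]; ring
  rw [key, zero_div]
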